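/- arXiv:2409.02351 — 7 statements merged into one kernel-verified Lean document; each statement's English description precedes it below -/
import Mathlib

section
/- The discrete Sobolev metric g^m is scale invariant: g^m_{λc}(λh, λk) = g^m_c(h,k) for all λ > 0. -/
open scoped BigOperators
open Finset

noncomputable section

variable {d n : ℕ}

/-- The `i`-th edge of a discrete closed curve. -/
def edge (c : ZMod n → EuclideanSpace ℝ (Fin d)) (i : ZMod n) : EuclideanSpace ℝ (Fin d) :=
  c (i + 1) - c i

/-- The averaged vertex weight `μ_i = (|e_i| + |e_{i-1}|)/2`. -/
def mu (c : ZMod n → EuclideanSpace ℝ (Fin d)) (i : ZMod n) : ℝ :=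
  (‖edge c i‖ + ‖edge c (i - 1)‖) / 2

/-- The total length `ℓ(c) = Σ_i |e_i|`. -/
def len [NeZero n] (c : ZMod n → EuclideanSpace ℝ (Fin d)) : ℝ :=
  ∑ i : ZMod n, ‖edge c i‖

/-- Discrete arc-length derivative `D_s^m h`. -/
def Ds (c : ZMod n → EuclideanSpace ℝ (Fin d)) :
    ℕ → (ZMod n → EuclideanSpace ℝ (Fin d)) → ZMod n → EuclideanSpace ℝ (Fin d)
  | 0, h => h
  | (j + 1), h => fun i =>
      if Even j then (‖edge c i‖)⁻¹ • (Ds c j h (i + 1) - Ds c j h i)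
      else (mu c i)⁻¹ • (Ds c j h i - Ds c j h (i - 1))

/-- The weight `μ_{i,m}`: `μ_i` for even `m`, `|e_i|` for odd `m`. -/
def muM (c : ZMod n → EuclideanSpace ℝ (Fin d)) (m : ℕ) (i : ZMod n) : ℝ :=
  if Even m then mu c i else ‖edge c i‖

/-- The homogeneous discrete Sobolev energy `ġ^m_c(h,k)`. -/
def gdot [NeZero n] (c : ZMod n → EuclideanSpace ℝ (Fin d)) (m : ℕ)
    (h k : ZMod n → EuclideanSpace ℝ (Fin d)) : ℝ :=
  ∑ i : ZMod n, (len c) ^ (2 * (m : ℤ) - 3) *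
    (inner ℝ (Ds c m h i) (Ds c m k i) : ℝ) * muM c m i

/-- The discrete Sobolev metric `g^m_c(h,k) = ġ^0_c(h,k) + ġ^m_c(h,k)`. -/
def gm [NeZero n] (c : ZMod n → EuclideanSpace ℝ (Fin d)) (m : ℕ)
    (h k : ZMod n → EuclideanSpace ℝ (Fin d)) : ℝ :=
  gdot c 0 h k + gdot c m h k

end

section Aux

variable {d n : ℕ}

lemma edge_smul (c : ZMod n → EuclideanSpace ℝ (Fin d)) (lam : ℝ) (i : ZMod n) :
    edge (fun j => lam • c j) i = lam • edge c i := by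
  simp [edge, smul_sub]

lemma norm_edge_smul (c : ZMod n → EuclideanSpace ℝ (Fin d)) {lam : ℝ} (hl : 0 ≤ lam)
    (i : ZMod n) : ‖edge (fun j => lam • c j) i‖ = lam * ‖edge c i‖ := by
  rw [edge_smul, norm_smul, Real.norm_eq_abs, abs_of_nonneg hl]

lemma mu_smul (c : ZMod n → EuclideanSpace ℝ (Fin d)) {lam : ℝ} (hl : 0 ≤ lam)
    (i : ZMod n) : mu (fun j => lam • c j) i = lam * mu c i := by
  simp [mu, norm_edge_smul c hl]; ring

lemma len_smul [NeZero n] (c : ZMod n → EuclideanSpace ℝ (Fin d)) {lam : ℝ} (hl : 0 ≤ lam) :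
    len (fun j => lam • c j) = lam * len c := by
  simp [len, norm_edge_smul c hl, Finset.mul_sum]

lemma Ds_smul (c h : ZMod n → EuclideanSpace ℝ (Fin d)) {lam : ℝ} (hl : 0 < lam)
    (j : ℕ) (i : ZMod n) :
    Ds (fun x => lam • c x) j (fun x => lam • h x) i = (lam ^ (1 - (j : ℤ))) • Ds c j h i := by
  induction j generalizing i with
  | zero => simp [Ds]
  | succ j ih =>
    have hlne : lam ≠ 0 := ne_of_gt hl
    have key : lam⁻¹ * lam ^ (1 - (j : ℤ)) = lam ^ (1 - ((j : ℤ) + 1)) := by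
      rw [← zpow_neg_one, ← zpow_add₀ hlne]; ring_nf
    by_cases hj : Even j
    · simp only [Ds, if_pos hj, ih, norm_edge_smul c hl.le, mul_inv, ← smul_sub,
        smul_smul]
      congr 1
      push_cast
      rw [← key]; ring
    · simp only [Ds, if_neg hj, ih, mu_smul c hl.le, mul_inv, ← smul_sub, smul_smul]
      congr 1
      push_cast
      rw [← key]; ring

lemma muM_smul (c : ZMod n → EuclideanSpace ℝ (Fin d)) {lam : ℝ} (hl : 0 ≤ lam)
    (m : ℕ) (i : ZMod n) : muM (fun j => lam • c j) m i = lam * muM c m i := by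
  unfold muM; split <;> simp [mu_smul c hl, norm_edge_smul c hl]

lemma gdot_smul [NeZero n] (c h k : ZMod n → EuclideanSpace ℝ (Fin d)) {lam : ℝ}
    (hl : 0 < lam) (m : ℕ) :
    gdot (fun i => lam • c i) m (fun i => lam • h i) (fun i => lam • k i) = gdot c m h k := by
  have hlne : lam ≠ 0 := ne_of_gt hl
  unfold gdot
  refine Finset.sum_congr rfl fun i _ => ?_
  rw [len_smul c hl.le, Ds_smul c h hl, Ds_smul c k hl, muM_smul c hl.le,
    real_inner_smul_left, real_inner_smul_right, mul_zpow]
  have : lam ^ (2 * (m : ℤ) - 3) * (lam ^ (1 - (m : ℤ)) * (lam ^ (1 - (m : ℤ)) * 1)) * lam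
      = 1 := by
    rw [mul_one, ← zpow_add₀ hlne, ← zpow_add₀ hlne,
      show (2 * (m : ℤ) - 3 + (1 - (m : ℤ) + (1 - (m : ℤ)))) = -1 by ring, zpow_neg_one,
      inv_mul_cancel₀ hlne]
  calc lam ^ (2 * (m : ℤ) - 3) * len c ^ (2 * (m : ℤ) - 3) *
        (lam ^ (1 - (m : ℤ)) * (lam ^ (1 - (m : ℤ)) * inner ℝ (Ds c m h i) (Ds c m k i))) *
        (lam * muM c m i)
      = (lam ^ (2 * (m : ℤ) - 3) * (lam ^ (1 - (m : ℤ)) * (lam ^ (1 - (m : ℤ)) * 1)) * lam) *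
        (len c ^ (2 * (m : ℤ) - 3) * (inner ℝ (Ds c m h i) (Ds c m k i) : ℝ) * muM c m i) := by
        ring
    _ = _ := by rw [this, one_mul]

end Aux

/-- Scale invariance of `g^m`. -/
theorem stmt_6 (d n m : ℕ) [NeZero n] (hn : 3 ≤ n)
    (c h k : ZMod n → EuclideanSpace ℝ (Fin d))
    (hc : ∀ i : ZMod n, c i ≠ c (i + 1)) (lam : ℝ) (hlam : 0 < lam) :
    gm (fun i => lam • c i) m (fun i => lam • h i) (fun i => lam • k i) = gm c m h k := by
  unfold gm
  rw [gdot_smul c h k hlam, gdot_smul c h k hlam]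
end

section
/- For any real numbers a_1,...,a_n (cyclically indexed) with Σ_{i=1}^n a_i = 0, and any index k: |a_k| ≤ (1/2) Σ_{i=1}^n |a_{i+1} - a_i|. -/
open scoped BigOperators
open Finset

lemma tel (n : ℕ) (a : ZMod n → ℝ) (i : ZMod n) (m : ℕ) :
    a (i + m) - a i = ∑ t ∈ Finset.range m, (a (i + t + 1) - a (i + t)) := by
  induction m with
  | zero => simp
  | succ m ih =>
      rw [Finset.sum_range_succ, ← ih]
      have : ((m + 1 : ℕ) : ZMod n) = (m : ZMod n) + 1 := by push_cast; ring
      rw [this]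
      ring_nf

lemma reidx (n : ℕ) [NeZero n] (f : ZMod n → ℝ) (i : ZMod n) :
    ∑ t ∈ Finset.range n, f (i + t) = ∑ j : ZMod n, f j := by
  rw [Finset.sum_range fun t => f (i + t)]
  exact Fintype.sum_bijective (fun t : Fin n => i + (t : ZMod n))
    (by
      have h1 : Function.Bijective (fun t : Fin n => ((t : ℕ) : ZMod n)) := by
        constructor
        · intro x y h
          simpa [ZMod.val_cast_of_lt x.2, ZMod.val_cast_of_lt y.2, Fin.ext_iff] using
            congrArg ZMod.val h
        · intro j
          exact ⟨⟨j.val, j.val_lt⟩, ZMod.natCast_rightInverse j⟩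
      exact (Equiv.addLeft i).bijective.comp h1) _ _ (fun t => rfl)

lemma arcbound (n : ℕ) [NeZero n] (a : ZMod n → ℝ) (i : ZMod n) (m : ℕ) (hm : m ≤ n) :
    2 * |a (i + m) - a i| ≤ ∑ j : ZMod n, |a (j + 1) - a j| := by
  have h1 : |a (i + m) - a i| ≤ ∑ t ∈ Finset.range m, |a (i + t + 1) - a (i + t)| := by
    rw [tel]; exact Finset.abs_sum_le_sum_abs _ _
  have hzero : ∑ t ∈ Finset.range n, (a (i + t + 1) - a (i + t)) = 0 := by
    rw [← tel]; simp
  have h2 : |a (i + m) - a i| ≤ ∑ t ∈ Finset.Ico m n, |a (i + t + 1) - a (i + t)| := by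
    have hsplit : ∑ t ∈ Finset.Ico m n, (a (i + t + 1) - a (i + t)) = a i - a (i + m) := by
      have hc : ∑ t ∈ Finset.range m, (a (i + t + 1) - a (i + t))
            + ∑ t ∈ Finset.Ico m n, (a (i + t + 1) - a (i + t)) = 0 := by
        rw [Finset.sum_range_add_sum_Ico _ hm]; exact hzero
      rw [← tel] at hc; linarith
    calc |a (i + m) - a i| = |∑ t ∈ Finset.Ico m n, (a (i + t + 1) - a (i + t))| := by
              rw [hsplit, abs_sub_comm]
      _ ≤ _ := Finset.abs_sum_le_sum_abs _ _
  have htot : ∑ t ∈ Finset.range m, |a (i + t + 1) - a (i + t)|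
      + ∑ t ∈ Finset.Ico m n, |a (i + t + 1) - a (i + t)|
      = ∑ j : ZMod n, |a (j + 1) - a j| := by
    rw [Finset.sum_range_add_sum_Ico _ hm]
    exact reidx n (fun j => |a (j + 1) - a j|) i
  linarith


/-- A mean-zero cyclic real sequence is pointwise bounded by half the total
variation of its first differences. -/
theorem stmt_8 (n : ℕ) [NeZero n] (a : ZMod n → ℝ) (ha : ∑ i : ZMod n, a i = 0)
    (k : ZMod n) :
    |a k| ≤ (1 / 2) * ∑ i : ZMod n, |a (i + 1) - a i| := by
  set V := ∑ i : ZMod n, |a (i + 1) - a i| with hV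
  have key : ∀ j : ZMod n, |a k - a j| ≤ V / 2 := by
    intro j
    have hj : k + ((j - k).val : ℕ) = j := by
      rw [ZMod.natCast_rightInverse (j - k)]; ring
    have := arcbound n a k (j - k).val (le_of_lt (ZMod.val_lt _))
    rw [hj, abs_sub_comm] at this
    linarith
  have hn : (0 : ℝ) < n := by exact_mod_cast Nat.pos_of_ne_zero (NeZero.ne n)
  have hsum : ∑ j : ZMod n, (a k - a j) = n * a k := by
    rw [Finset.sum_sub_distrib, ha, Finset.sum_const]
    simp [ZMod.card, mul_comm]
  have : (n : ℝ) * |a k| ≤ (n : ℝ) * (V / 2) := by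
    calc (n : ℝ) * |a k| = |∑ j : ZMod n, (a k - a j)| := by
          rw [hsum, abs_mul, abs_of_pos hn]
      _ ≤ ∑ j : ZMod n, |a k - a j| := Finset.abs_sum_le_sum_abs _ _
      _ ≤ ∑ _j : ZMod n, V / 2 := Finset.sum_le_sum fun j _ => key j
      _ = (n : ℝ) * (V / 2) := by simp [ZMod.card, mul_comm]
  have := le_of_mul_le_mul_left this hn
  linarith
end

section
/- Domination of lower-order by higher-order discrete Sobolev energies: for m ≥ 1, c ∈ R^{d×n}_* and h ∈ (ℝ^d)^n, ġ^m_c(h,h) ≤ (1/4) ġ^{m+1}_c(h,h). -/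
open scoped BigOperators
open Finset

noncomputable section Aux

variable {d n : ℕ} [NeZero n]

/-- Shifting the summation index by one. -/
lemma aux_sum_shift {M : Type*} [AddCommMonoid M] (f : ZMod n → M) :
    ∑ i : ZMod n, f (i - 1) = ∑ i : ZMod n, f i :=
  Fintype.sum_equiv (Equiv.subRight (1 : ZMod n)) _ _ (fun _ => rfl)

/-- Forward telescoping sum over the cycle vanishes. -/
lemma aux_telescope (v : ZMod n → EuclideanSpace ℝ (Fin d)) :
    ∑ i : ZMod n, (v (i + 1) - v i) = 0 := by
  have : ∑ i : ZMod n, v (i + 1) = ∑ i : ZMod n, v i :=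
    Fintype.sum_equiv (Equiv.addRight (1 : ZMod n)) _ _ (fun _ => rfl)
  rw [Finset.sum_sub_distrib, this, sub_self]

/-- Backward telescoping sum over the cycle vanishes. -/
lemma aux_telescope' (v : ZMod n → EuclideanSpace ℝ (Fin d)) :
    ∑ i : ZMod n, (v i - v (i - 1)) = 0 := by
  have : ∑ i : ZMod n, v (i - 1) = ∑ i : ZMod n, v i := aux_sum_shift v
  rw [Finset.sum_sub_distrib, this, sub_self]

lemma aux_sum_mu (c : ZMod n → EuclideanSpace ℝ (Fin d)) :
    ∑ i : ZMod n, mu c i = len c := by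
  simp only [mu]
  rw [← Finset.sum_div, Finset.sum_add_distrib,
    aux_sum_shift (fun i => ‖edge c i‖), len]
  ring

lemma aux_sum_muM (c : ZMod n → EuclideanSpace ℝ (Fin d)) (m : ℕ) :
    ∑ i : ZMod n, muM c m i = len c := by
  by_cases hm : Even m
  · simp only [muM, if_pos hm]; exact aux_sum_mu c
  · simp only [muM, if_neg hm]; rfl

lemma aux_muM_pos (c : ZMod n → EuclideanSpace ℝ (Fin d))
    (hc : ∀ i, edge c i ≠ 0) (m : ℕ) (i : ZMod n) : 0 < muM c m i := by
  have h1 : ∀ j, 0 < ‖edge c j‖ := fun j => norm_pos_iff.mpr (hc j)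
  by_cases hm : Even m
  · simp only [muM, if_pos hm, mu]
    have h2 := h1 i
    have h3 := h1 (i - 1)
    positivity
  · simp only [muM, if_neg hm]; exact h1 i

/-- The weighted mean of `D_s^m h` vanishes for `m ≥ 1`. -/
lemma aux_mean_zero (c : ZMod n → EuclideanSpace ℝ (Fin d))
    (hc : ∀ i, edge c i ≠ 0) (h : ZMod n → EuclideanSpace ℝ (Fin d))
    (m : ℕ) (hm : 1 ≤ m) :
    ∑ i : ZMod n, muM c m i • Ds c m h i = 0 := by
  obtain ⟨j, rfl⟩ : ∃ j, m = j + 1 := ⟨m - 1, by omega⟩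
  by_cases hj : Even j
  · have hodd : ¬ Even (j + 1) := by simp [Nat.even_add_one, hj]
    have heq : ∀ i : ZMod n, muM c (j + 1) i • Ds c (j + 1) h i
        = Ds c j h (i + 1) - Ds c j h i := by
      intro i
      have he : ‖edge c i‖ ≠ 0 := norm_ne_zero_iff.mpr (hc i)
      simp only [muM, if_neg hodd, Ds, if_pos hj]
      rw [smul_inv_smul₀ he]
    rw [Finset.sum_congr rfl (fun i _ => heq i)]
    exact aux_telescope _
  · have heven : Even (j + 1) := Nat.even_add_one.mpr hj
    have hmu : ∀ i, mu c i ≠ 0 := by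
      intro i
      have h1 : 0 < ‖edge c i‖ := norm_pos_iff.mpr (hc i)
      have h2 : 0 < ‖edge c (i - 1)‖ := norm_pos_iff.mpr (hc (i - 1))
      simp only [mu]; positivity
    have heq : ∀ i : ZMod n, muM c (j + 1) i • Ds c (j + 1) h i
        = Ds c j h i - Ds c j h (i - 1) := by
      intro i
      simp only [muM, if_pos heven, Ds, if_neg hj]
      rw [smul_inv_smul₀ (hmu i)]
    rw [Finset.sum_congr rfl (fun i _ => heq i)]
    exact aux_telescope' _

/-- The sum of norms of increments of `D_s^m h` equals the weighted `L¹` norm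
of `D_s^{m+1} h`. -/
lemma aux_incr (c : ZMod n → EuclideanSpace ℝ (Fin d))
    (hc : ∀ i, edge c i ≠ 0) (h : ZMod n → EuclideanSpace ℝ (Fin d)) (m : ℕ) :
    ∑ i : ZMod n, ‖Ds c m h (i + 1) - Ds c m h i‖
      = ∑ i : ZMod n, muM c (m + 1) i * ‖Ds c (m + 1) h i‖ := by
  by_cases hm : Even m
  · have hodd : ¬ Even (m + 1) := by simp [Nat.even_add_one, hm]
    refine Finset.sum_congr rfl fun i _ => ?_
    have he : 0 < ‖edge c i‖ := norm_pos_iff.mpr (hc i)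
    simp only [muM, if_neg hodd, Ds, if_pos hm]
    rw [norm_smul, norm_inv, norm_norm]
    field_simp
  · have heven : Even (m + 1) := Nat.even_add_one.mpr hm
    have key : ∀ i : ZMod n, muM c (m + 1) i * ‖Ds c (m + 1) h i‖
        = ‖Ds c m h i - Ds c m h (i - 1)‖ := by
      intro i
      have h1 : 0 < ‖edge c i‖ := norm_pos_iff.mpr (hc i)
      have h2 : 0 < ‖edge c (i - 1)‖ := norm_pos_iff.mpr (hc (i - 1))
      have hmu : 0 < mu c i := by simp only [mu]; positivity
      simp only [muM, if_pos heven, Ds, if_neg hm]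
      rw [norm_smul, norm_inv, Real.norm_eq_abs, abs_of_pos hmu]
      field_simp
    rw [Finset.sum_congr rfl (fun i _ => key i)]
    have := aux_sum_shift (n := n) (fun i => ‖Ds c m h (i + 1) - Ds c m h i‖)
    rw [← this]
    refine Finset.sum_congr rfl fun i _ => ?_
    simp [sub_add_cancel]

/-- Partial telescoping along the cycle. -/
lemma aux_partial (u : ZMod n → EuclideanSpace ℝ (Fin d)) (j : ZMod n) (k : ℕ) :
    u (j + (k : ZMod n)) - u j
      = ∑ t ∈ Finset.range k, (u (j + (t : ZMod n) + 1) - u (j + (t : ZMod n))) := by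
  induction k with
  | zero => simp
  | succ k ih =>
      rw [Finset.sum_range_succ, ← ih]
      have : (((k : ℕ) + 1 : ℕ) : ZMod n) = (k : ZMod n) + 1 := by push_cast; ring
      rw [this, ← add_assoc]
      abel

/-- Any two values of a cyclic sequence differ by at most half the total
variation. -/
lemma aux_two_arc (u : ZMod n → EuclideanSpace ℝ (Fin d)) (i j : ZMod n) :
    2 * ‖u i - u j‖ ≤ ∑ p : ZMod n, ‖u (p + 1) - u p‖ := by
  set e : ZMod n → EuclideanSpace ℝ (Fin d) := fun p => u (p + 1) - u p with he
  set k := (i - j).val with hk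
  have hkn : k ≤ n := le_of_lt (ZMod.val_lt _)
  have hcast : ((k : ℕ) : ZMod n) = i - j := ZMod.natCast_rightInverse _
  have h1 : u i - u j = ∑ t ∈ Finset.range k, e (j + (t : ZMod n)) := by
    have := aux_partial u j k
    rw [hcast] at this
    simpa [he] using this
  have hfull : ∑ t ∈ Finset.range n, e (j + (t : ZMod n)) = 0 := by
    have := aux_partial u j n
    simp only [ZMod.natCast_self, add_zero, sub_self] at this
    rw [← this]
  have hsplit : ∑ t ∈ Finset.range k, e (j + (t : ZMod n))
      + ∑ t ∈ Finset.Ico k n, e (j + (t : ZMod n))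
      = ∑ t ∈ Finset.range n, e (j + (t : ZMod n)) := by
    rw [Finset.range_eq_Ico, Finset.range_eq_Ico]
    exact Finset.sum_Ico_consecutive _ (Nat.zero_le k) hkn
  have h2 : u i - u j = -∑ t ∈ Finset.Ico k n, e (j + (t : ZMod n)) := by
    rw [h1, eq_neg_iff_add_eq_zero, hsplit, hfull]
  have hnsplit : ∑ t ∈ Finset.range k, ‖e (j + (t : ZMod n))‖
      + ∑ t ∈ Finset.Ico k n, ‖e (j + (t : ZMod n))‖
      = ∑ t ∈ Finset.range n, ‖e (j + (t : ZMod n))‖ := by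
    rw [Finset.range_eq_Ico, Finset.range_eq_Ico]
    exact Finset.sum_Ico_consecutive _ (Nat.zero_le k) hkn
  have hbij : ∑ t ∈ Finset.range n, ‖e (j + (t : ZMod n))‖
      = ∑ p : ZMod n, ‖e p‖ := by
    refine Finset.sum_nbij' (i := fun t => j + (t : ZMod n))
      (j := fun p => (p - j).val) ?_ ?_ ?_ ?_ ?_
    · intro a _; exact Finset.mem_univ _
    · intro a _
      exact Finset.mem_range.mpr (ZMod.val_lt _)
    · intro a ha
      show (j + (a : ZMod n) - j).val = a
      rw [add_sub_cancel_left]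
      exact ZMod.val_cast_of_lt (Finset.mem_range.mp ha)
    · intro a _
      show j + (((a - j).val : ℕ) : ZMod n) = a
      rw [ZMod.natCast_rightInverse (a - j)]
      ring
    · intro a _; rfl
  calc 2 * ‖u i - u j‖ = ‖u i - u j‖ + ‖u i - u j‖ := by ring
    _ ≤ ∑ t ∈ Finset.range k, ‖e (j + (t : ZMod n))‖
        + ∑ t ∈ Finset.Ico k n, ‖e (j + (t : ZMod n))‖ := by
        gcongr
        · rw [h1]; exact norm_sum_le _ _
        · rw [h2, norm_neg]; exact norm_sum_le _ _
    _ = ∑ p : ZMod n, ‖e p‖ := by rw [hnsplit, hbij]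

end Aux

/-- The lower-order discrete Sobolev energy is dominated by a quarter of the
next higher-order one. -/
theorem stmt_12 (d n m : ℕ) [NeZero n] (hn : 3 ≤ n) (hm : 1 ≤ m)
    (c : ZMod n → EuclideanSpace ℝ (Fin d))
    (hc : ∀ i : ZMod n, c i ≠ c (i + 1))
    (h : ZMod n → EuclideanSpace ℝ (Fin d)) :
    gdot c m h h ≤ (1 / 4) * gdot c (m + 1) h h := by
  have hc' : ∀ i, edge c i ≠ 0 := by
    intro i
    simp only [edge, sub_ne_zero]
    exact fun hEq => hc i hEq.symm
  have hepos : ∀ i, 0 < ‖edge c i‖ := fun i => norm_pos_iff.mpr (hc' i)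
  set u : ZMod n → EuclideanSpace ℝ (Fin d) := Ds c m h with hu
  set D : ZMod n → EuclideanSpace ℝ (Fin d) := Ds c (m + 1) h with hD
  set ℓ : ℝ := len c with hℓdef
  have hℓ : 0 < ℓ := Finset.sum_pos (fun i _ => hepos i) ⟨0, Finset.mem_univ 0⟩
  have hw : ∀ i, 0 < muM c m i := aux_muM_pos c hc' m
  have hw' : ∀ i, 0 < muM c (m + 1) i := aux_muM_pos c hc' (m + 1)
  have hsumw : ∑ i : ZMod n, muM c m i = ℓ := aux_sum_muM c m
  have hsumw' : ∑ i : ZMod n, muM c (m + 1) i = ℓ := aux_sum_muM c (m + 1)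
  set S : ℝ := ∑ i : ZMod n, ‖u (i + 1) - u i‖ with hS
  -- pointwise bound ‖u i‖ ≤ S / 2
  have hpt : ∀ i : ZMod n, ‖u i‖ ≤ S / 2 := by
    intro i
    have hmean : ∑ j : ZMod n, muM c m j • u j = 0 := aux_mean_zero c hc' h m hm
    have key : ℓ • u i = ∑ j : ZMod n, muM c m j • (u i - u j) := by
      have : ∑ j : ZMod n, muM c m j • (u i - u j)
          = (∑ j : ZMod n, muM c m j) • u i - ∑ j : ZMod n, muM c m j • u j := by
        rw [Finset.sum_smul, ← Finset.sum_sub_distrib]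
        exact Finset.sum_congr rfl fun j _ => smul_sub _ _ _
      rw [this, hmean, hsumw, sub_zero]
    have hub : ℓ * ‖u i‖ ≤ ℓ * (S / 2) := by
      calc ℓ * ‖u i‖ = ‖ℓ • u i‖ := by
            rw [norm_smul, Real.norm_eq_abs, abs_of_pos hℓ]
        _ ≤ ∑ j : ZMod n, ‖muM c m j • (u i - u j)‖ := by
            rw [key]; exact norm_sum_le _ _
        _ = ∑ j : ZMod n, muM c m j * ‖u i - u j‖ := by
            refine Finset.sum_congr rfl fun j _ => ?_
            rw [norm_smul, Real.norm_eq_abs, abs_of_pos (hw j)]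
        _ ≤ ∑ j : ZMod n, muM c m j * (S / 2) := by
            refine Finset.sum_le_sum fun j _ => ?_
            refine mul_le_mul_of_nonneg_left ?_ (le_of_lt (hw j))
            have := aux_two_arc u i j
            linarith
        _ = ℓ * (S / 2) := by rw [← Finset.sum_mul, hsumw]
    exact le_of_mul_le_mul_left hub hℓ
  -- Cauchy–Schwarz: S² ≤ ℓ * ∑ w' ‖D‖²
  have hSval : S = ∑ i : ZMod n, muM c (m + 1) i * ‖D i‖ := aux_incr c hc' h m
  have hCS : S ^ 2 ≤ ℓ * ∑ i : ZMod n, muM c (m + 1) i * ‖D i‖ ^ 2 := by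
    have := Finset.sum_mul_sq_le_sq_mul_sq Finset.univ
      (fun i : ZMod n => Real.sqrt (muM c (m + 1) i))
      (fun i : ZMod n => Real.sqrt (muM c (m + 1) i) * ‖D i‖)
    have e1 : ∑ i : ZMod n, Real.sqrt (muM c (m + 1) i)
        * (Real.sqrt (muM c (m + 1) i) * ‖D i‖) = S := by
      rw [hSval]
      refine Finset.sum_congr rfl fun i _ => ?_
      rw [← mul_assoc, Real.mul_self_sqrt (le_of_lt (hw' i))]
    have e2 : ∑ i : ZMod n, Real.sqrt (muM c (m + 1) i) ^ 2 = ℓ := by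
      rw [← hsumw']
      refine Finset.sum_congr rfl fun i _ => ?_
      exact Real.sq_sqrt (le_of_lt (hw' i))
    have e3 : ∑ i : ZMod n, (Real.sqrt (muM c (m + 1) i) * ‖D i‖) ^ 2
        = ∑ i : ZMod n, muM c (m + 1) i * ‖D i‖ ^ 2 := by
      refine Finset.sum_congr rfl fun i _ => ?_
      rw [mul_pow, Real.sq_sqrt (le_of_lt (hw' i))]
    rw [e1, e2, e3] at this
    exact this
  -- Rewriting the energies
  have g1 : gdot c m h h = ℓ ^ (2 * (m : ℤ) - 3) * ∑ i : ZMod n, ‖u i‖ ^ 2 * muM c m i := by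
    rw [gdot, Finset.mul_sum]
    refine Finset.sum_congr rfl fun i _ => ?_
    rw [real_inner_self_eq_norm_mul_norm]
    ring
  have g2 : gdot c (m + 1) h h
      = ℓ ^ (2 * ((m : ℤ) + 1) - 3) * ∑ i : ZMod n, muM c (m + 1) i * ‖D i‖ ^ 2 := by
    rw [gdot, Finset.mul_sum]
    refine Finset.sum_congr rfl fun i _ => ?_
    rw [real_inner_self_eq_norm_mul_norm]
    push_cast
    ring
  have hB : 0 ≤ ∑ i : ZMod n, muM c (m + 1) i * ‖D i‖ ^ 2 :=
    Finset.sum_nonneg fun i _ => mul_nonneg (le_of_lt (hw' i)) (sq_nonneg _)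
  have hS0 : 0 ≤ S := Finset.sum_nonneg fun i _ => norm_nonneg _
  have hA : ∑ i : ZMod n, ‖u i‖ ^ 2 * muM c m i
      ≤ (ℓ ^ 2 / 4) * ∑ i : ZMod n, muM c (m + 1) i * ‖D i‖ ^ 2 := by
    calc ∑ i : ZMod n, ‖u i‖ ^ 2 * muM c m i
        ≤ ∑ i : ZMod n, (S / 2) ^ 2 * muM c m i := by
          refine Finset.sum_le_sum fun i _ => ?_
          refine mul_le_mul_of_nonneg_right ?_ (le_of_lt (hw i))
          exact pow_le_pow_left₀ (norm_nonneg _) (hpt i) 2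
      _ = (S / 2) ^ 2 * ℓ := by rw [← Finset.mul_sum, hsumw, mul_comm]
      _ = S ^ 2 * ℓ / 4 := by ring
      _ ≤ (ℓ * ∑ i : ZMod n, muM c (m + 1) i * ‖D i‖ ^ 2) * ℓ / 4 := by
          have := hCS
          nlinarith [hℓ]
      _ = (ℓ ^ 2 / 4) * ∑ i : ZMod n, muM c (m + 1) i * ‖D i‖ ^ 2 := by ring
  rw [g1, g2]
  have hzpos : (0 : ℝ) < ℓ ^ (2 * (m : ℤ) - 3) := zpow_pos hℓ _
  calc ℓ ^ (2 * (m : ℤ) - 3) * ∑ i : ZMod n, ‖u i‖ ^ 2 * muM c m i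
      ≤ ℓ ^ (2 * (m : ℤ) - 3)
        * ((ℓ ^ 2 / 4) * ∑ i : ZMod n, muM c (m + 1) i * ‖D i‖ ^ 2) :=
        mul_le_mul_of_nonneg_left hA (le_of_lt hzpos)
    _ = (1 / 4) * (ℓ ^ (2 * ((m : ℤ) + 1) - 3)
        * ∑ i : ZMod n, muM c (m + 1) i * ‖D i‖ ^ 2) := by
        have hzp : ℓ ^ (2 * (m : ℤ) - 3) * ℓ ^ (2 : ℤ) = ℓ ^ (2 * ((m : ℤ) + 1) - 3) := by
          rw [← zpow_add₀ (ne_of_gt hℓ)]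
          ring_nf
        have h2 : (ℓ : ℝ) ^ (2 : ℕ) = ℓ ^ (2 : ℤ) := by
          rw [← zpow_natCast]; norm_num
        rw [← hzp, ← h2]
        ring
end

section
/- Constant-coefficient version of the energy domination: for m ≥ 1, c ∈ R^{d×n}_*, h ∈ (ℝ^d)^n, the constant-coefficient discrete energies satisfy ġ̃^m_c(h,h) ≤ (ℓ(c)²/4) ġ̃^{m+1}_c(h,h). -/
open scoped BigOperators
open Finset

/-- The constant-coefficient homogeneous discrete Sobolev energy `ġ̃^m_c(h,h)`. -/
noncomputable def gdotCC [NeZero n] (c : ZMod n → EuclideanSpace ℝ (Fin d)) (m : ℕ)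
    (h : ZMod n → EuclideanSpace ℝ (Fin d)) : ℝ :=
  ∑ i : ZMod n, ‖Ds c m h i‖ ^ 2 * muM c m i

section Aux

variable {d n : ℕ} [NeZero n]

lemma zmod_sum_shift {M : Type*} [AddCommMonoid M] (F : ZMod n → M) (a : ZMod n) :
    ∑ i : ZMod n, F (i + a) = ∑ i : ZMod n, F i :=
  Fintype.sum_equiv (Equiv.addRight a) _ _ (fun _ => rfl)

lemma zmod_telescope (f : ZMod n → EuclideanSpace ℝ (Fin d)) (a : ZMod n) (t : ℕ) :
    f (a + (t : ZMod n)) - f a = ∑ s ∈ Finset.range t, (f (a + (s : ZMod n) + 1) - f (a + (s : ZMod n))) := by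
  induction t with
  | zero => simp
  | succ t ih =>
      rw [Finset.sum_range_succ, ← ih]
      have : a + ((t + 1 : ℕ) : ZMod n) = a + (t : ZMod n) + 1 := by push_cast; ring
      rw [this]
      abel

lemma zmod_sum_range_n (F : ZMod n → ℝ) (a : ZMod n) :
    ∑ s ∈ Finset.range n, F (a + (s : ZMod n)) = ∑ i : ZMod n, F i := by
  rw [← Fin.sum_univ_eq_sum_range (fun s => F (a + (s : ZMod n))) n]
  refine Fintype.sum_bijective (fun s : Fin n => a + ((s : ℕ) : ZMod n)) ⟨?_, ?_⟩ _ _ (fun _ => rfl)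
  · intro s t hst
    have h1 : ((s : ℕ) : ZMod n) = ((t : ℕ) : ZMod n) := by
      have := add_left_cancel hst
      exact this
    have := congrArg ZMod.val h1
    rw [ZMod.val_cast_of_lt s.isLt, ZMod.val_cast_of_lt t.isLt] at this
    exact Fin.ext this
  · intro i
    refine ⟨⟨(i - a).val, ZMod.val_lt _⟩, ?_⟩
    simp only [ZMod.natCast_zmod_val]
    ring

lemma arc_bound (f g : ZMod n → EuclideanSpace ℝ (Fin d)) (v : ZMod n → ℝ)
    (hv : ∀ i, 0 < v i)
    (hstep : ∀ i, f (i + 1) - f i = v i • g i)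
    (a : ZMod n) (t : ℕ) (ht : t ≤ n) :
    ‖f (a + (t : ZMod n)) - f a‖ ^ 2
      ≤ (∑ s ∈ Finset.range t, v (a + (s : ZMod n))) * ∑ i : ZMod n, ‖g i‖ ^ 2 * v i := by
  have h1 : ‖f (a + (t : ZMod n)) - f a‖
      ≤ ∑ s ∈ Finset.range t, v (a + (s : ZMod n)) * ‖g (a + (s : ZMod n))‖ := by
    rw [zmod_telescope]
    refine (norm_sum_le _ _).trans (le_of_eq ?_)
    refine Finset.sum_congr rfl fun s _ => ?_
    rw [hstep, norm_smul, Real.norm_of_nonneg (hv _).le]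
  have h2 : (∑ s ∈ Finset.range t, v (a + (s : ZMod n)) * ‖g (a + (s : ZMod n))‖) ^ 2
      ≤ (∑ s ∈ Finset.range t, v (a + (s : ZMod n)))
        * ∑ s ∈ Finset.range t, ‖g (a + (s : ZMod n))‖ ^ 2 * v (a + (s : ZMod n)) := by
    have key := Finset.sum_mul_sq_le_sq_mul_sq (Finset.range t)
      (fun s => Real.sqrt (v (a + (s : ZMod n))))
      (fun s => Real.sqrt (v (a + (s : ZMod n))) * ‖g (a + (s : ZMod n))‖)
    have e1 : ∀ s ∈ Finset.range t, Real.sqrt (v (a + (s : ZMod n)))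
        * (Real.sqrt (v (a + (s : ZMod n))) * ‖g (a + (s : ZMod n))‖)
        = v (a + (s : ZMod n)) * ‖g (a + (s : ZMod n))‖ := by
      intro s _
      rw [← mul_assoc, Real.mul_self_sqrt (hv _).le]
    have e2 : ∀ s ∈ Finset.range t, Real.sqrt (v (a + (s : ZMod n))) ^ 2 = v (a + (s : ZMod n)) := by
      intro s _
      exact Real.sq_sqrt (hv _).le
    have e3 : ∀ s ∈ Finset.range t, (Real.sqrt (v (a + (s : ZMod n))) * ‖g (a + (s : ZMod n))‖) ^ 2
        = ‖g (a + (s : ZMod n))‖ ^ 2 * v (a + (s : ZMod n)) := by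
      intro s _
      rw [mul_pow, Real.sq_sqrt (hv _).le]
      ring
    rw [Finset.sum_congr rfl e1, Finset.sum_congr rfl e2, Finset.sum_congr rfl e3] at key
    exact key
  have h3 : ∑ s ∈ Finset.range t, ‖g (a + (s : ZMod n))‖ ^ 2 * v (a + (s : ZMod n))
      ≤ ∑ i : ZMod n, ‖g i‖ ^ 2 * v i := by
    rw [← zmod_sum_range_n (fun i => ‖g i‖ ^ 2 * v i) a]
    refine Finset.sum_le_sum_of_subset_of_nonneg (Finset.range_subset_range.2 ht) ?_
    intro s _ _
    exact mul_nonneg (by positivity) (hv _).le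
  have h4 : (0 : ℝ) ≤ ∑ s ∈ Finset.range t, v (a + (s : ZMod n)) :=
    Finset.sum_nonneg fun s _ => (hv _).le
  calc ‖f (a + (t : ZMod n)) - f a‖ ^ 2
      ≤ (∑ s ∈ Finset.range t, v (a + (s : ZMod n)) * ‖g (a + (s : ZMod n))‖) ^ 2 := by
        exact pow_le_pow_left₀ (norm_nonneg _) h1 2
    _ ≤ (∑ s ∈ Finset.range t, v (a + (s : ZMod n)))
        * ∑ s ∈ Finset.range t, ‖g (a + (s : ZMod n))‖ ^ 2 * v (a + (s : ZMod n)) := h2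
    _ ≤ (∑ s ∈ Finset.range t, v (a + (s : ZMod n))) * ∑ i : ZMod n, ‖g i‖ ^ 2 * v i := by
        exact mul_le_mul_of_nonneg_left h3 h4

lemma pair_bound (f g : ZMod n → EuclideanSpace ℝ (Fin d)) (v : ZMod n → ℝ)
    (hv : ∀ i, 0 < v i)
    (hstep : ∀ i, f (i + 1) - f i = v i • g i)
    (L : ℝ) (hL : ∑ i : ZMod n, v i = L) (i j : ZMod n) :
    2 * ‖f i - f j‖ ^ 2 ≤ L * ∑ i : ZMod n, ‖g i‖ ^ 2 * v i := by
  have hE : (0 : ℝ) ≤ ∑ i : ZMod n, ‖g i‖ ^ 2 * v i :=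
    Finset.sum_nonneg fun s _ => mul_nonneg (by positivity) (hv _).le
  have hLpos : 0 < L := hL ▸ Finset.sum_pos (fun i _ => hv i) Finset.univ_nonempty
  rcases eq_or_ne i j with rfl | hij
  · simp only [sub_self, norm_zero]
    nlinarith [mul_nonneg hLpos.le hE]
  · set t : ℕ := (i - j).val with hvt
    have hne : NeZero (i - j) := ⟨sub_ne_zero.2 hij⟩
    have hti : j + (t : ZMod n) = i := by
      rw [hvt, ZMod.natCast_zmod_val]; ring
    have htj : i + ((n - t : ℕ) : ZMod n) = j := by
      have : (j - i).val = n - t := by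
        rw [show j - i = -(i - j) by ring, ZMod.val_neg_of_ne_zero]
      rw [← this, ZMod.natCast_zmod_val]; ring
    have b1 := arc_bound f g v hv hstep j t (ZMod.val_lt _).le
    have b2 := arc_bound f g v hv hstep i (n - t) (Nat.sub_le _ _)
    rw [hti] at b1
    rw [htj] at b2
    have hsum : (∑ s ∈ Finset.range t, v (j + (s : ZMod n)))
        + (∑ s ∈ Finset.range (n - t), v (i + (s : ZMod n))) = L := by
      have hnt : t + (n - t) = n := Nat.add_sub_cancel' (ZMod.val_lt _).le
      have hrange : ∑ s ∈ Finset.range (t + (n - t)), v (j + (s : ZMod n)) = L := by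
        rw [hnt, zmod_sum_range_n, hL]
      rw [Finset.sum_range_add] at hrange
      rw [← hrange]
      congr 1
      refine Finset.sum_congr rfl fun s _ => ?_
      congr 1
      rw [← hti]
      push_cast
      ring
    have hrev : ‖f j - f i‖ = ‖f i - f j‖ := norm_sub_rev _ _
    rw [hrev] at b2
    calc 2 * ‖f i - f j‖ ^ 2 = ‖f i - f j‖ ^ 2 + ‖f i - f j‖ ^ 2 := by ring
      _ ≤ (∑ s ∈ Finset.range t, v (j + (s : ZMod n))) * (∑ i : ZMod n, ‖g i‖ ^ 2 * v i)
          + (∑ s ∈ Finset.range (n - t), v (i + (s : ZMod n))) * (∑ i : ZMod n, ‖g i‖ ^ 2 * v i) :=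
        add_le_add b1 b2
      _ = L * ∑ i : ZMod n, ‖g i‖ ^ 2 * v i := by rw [← add_mul, hsum]

lemma poincare (f g : ZMod n → EuclideanSpace ℝ (Fin d)) (v w : ZMod n → ℝ)
    (hv : ∀ i, 0 < v i) (hw : ∀ i, 0 < w i) (L : ℝ)
    (hLv : ∑ i : ZMod n, v i = L) (hLw : ∑ i : ZMod n, w i = L)
    (hmean : ∑ i : ZMod n, w i • f i = 0)
    (hstep : ∀ i, f (i + 1) - f i = v i • g i) :
    ∑ i : ZMod n, ‖f i‖ ^ 2 * w i ≤ L ^ 2 / 4 * ∑ i : ZMod n, ‖g i‖ ^ 2 * v i := by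
  set S := ∑ i : ZMod n, ‖f i‖ ^ 2 * w i with hSdef
  set E := ∑ i : ZMod n, ‖g i‖ ^ 2 * v i with hEdef
  have hLpos : 0 < L := hLw ▸ Finset.sum_pos (fun i _ => hw i) Finset.univ_nonempty
  have hEnn : (0 : ℝ) ≤ E := Finset.sum_nonneg fun s _ => mul_nonneg (by positivity) (hv _).le
  have hS' : ∑ i : ZMod n, w i * ‖f i‖ ^ 2 = S :=
    Finset.sum_congr rfl fun i _ => mul_comm _ _
  have T1 : ∑ i : ZMod n, ∑ j : ZMod n, (w i * ‖f i‖ ^ 2) * w j = S * L := by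
    rw [← Finset.sum_mul_sum, hS', hLw]
  have T2 : ∑ i : ZMod n, ∑ j : ZMod n, w i * (w j * ‖f j‖ ^ 2) = L * S := by
    rw [← Finset.sum_mul_sum, hS', hLw]
  have T3 : ∑ i : ZMod n, ∑ j : ZMod n, (inner ℝ (w i • f i) (w j • f j) : ℝ) = 0 := by
    have key : (inner ℝ (∑ i : ZMod n, w i • f i) (∑ j : ZMod n, w j • f j) : ℝ)
        = ∑ i : ZMod n, ∑ j : ZMod n, (inner ℝ (w i • f i) (w j • f j) : ℝ) := by
      rw [sum_inner]
      exact Finset.sum_congr rfl fun i _ => inner_sum _ _ _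
    rw [← key, hmean, inner_zero_left]
  have hid : ∑ i : ZMod n, ∑ j : ZMod n, w i * w j * ‖f i - f j‖ ^ 2 = 2 * L * S := by
    have e1 : ∀ i j : ZMod n, w i * w j * ‖f i - f j‖ ^ 2
        = (w i * ‖f i‖ ^ 2) * w j + w i * (w j * ‖f j‖ ^ 2)
          - 2 * (inner ℝ (w i • f i) (w j • f j) : ℝ) := by
      intro i j
      rw [norm_sub_sq_real, real_inner_smul_left, real_inner_smul_right]
      ring
    calc ∑ i : ZMod n, ∑ j : ZMod n, w i * w j * ‖f i - f j‖ ^ 2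
        = ∑ i : ZMod n, ∑ j : ZMod n, ((w i * ‖f i‖ ^ 2) * w j + w i * (w j * ‖f j‖ ^ 2)
            - 2 * (inner ℝ (w i • f i) (w j • f j) : ℝ)) :=
          Finset.sum_congr rfl fun i _ => Finset.sum_congr rfl fun j _ => e1 i j
      _ = (∑ i : ZMod n, ∑ j : ZMod n, (w i * ‖f i‖ ^ 2) * w j)
          + (∑ i : ZMod n, ∑ j : ZMod n, w i * (w j * ‖f j‖ ^ 2))
          - 2 * ∑ i : ZMod n, ∑ j : ZMod n, (inner ℝ (w i • f i) (w j • f j) : ℝ) := by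
          simp only [Finset.sum_add_distrib, Finset.sum_sub_distrib, ← Finset.mul_sum]
      _ = 2 * L * S := by rw [T1, T2, T3]; ring
  have hle : ∑ i : ZMod n, ∑ j : ZMod n, w i * w j * ‖f i - f j‖ ^ 2
      ≤ L * L * (L * E / 2) := by
    calc ∑ i : ZMod n, ∑ j : ZMod n, w i * w j * ‖f i - f j‖ ^ 2
        ≤ ∑ i : ZMod n, ∑ j : ZMod n, w i * w j * (L * E / 2) := by
          refine Finset.sum_le_sum fun i _ => Finset.sum_le_sum fun j _ => ?_
          have hp := pair_bound f g v hv hstep L hLv i j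
          have hwne : 0 ≤ w i * w j := mul_nonneg (hw i).le (hw j).le
          have : ‖f i - f j‖ ^ 2 ≤ L * E / 2 := by linarith
          exact mul_le_mul_of_nonneg_left this hwne
      _ = ∑ i : ZMod n, ∑ j : ZMod n, w i * (w j * (L * E / 2)) := by
          exact Finset.sum_congr rfl fun i _ => Finset.sum_congr rfl fun j _ => by ring
      _ = L * L * (L * E / 2) := by
          rw [← Finset.sum_mul_sum, hLw, ← Finset.sum_mul, hLw]
          ring
  have h2LS : 2 * L * S ≤ L * L * (L * E / 2) := hid ▸ hle
  nlinarith [hLpos, hEnn]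

lemma zmod_tele_zero (F : ZMod n → EuclideanSpace ℝ (Fin d)) :
    ∑ i : ZMod n, (F (i + 1) - F i) = 0 := by
  rw [Finset.sum_sub_distrib, zmod_sum_shift F 1, sub_self]

lemma zmod_tele_zero' (F : ZMod n → EuclideanSpace ℝ (Fin d)) :
    ∑ i : ZMod n, (F i - F (i - 1)) = 0 := by
  have : ∑ i : ZMod n, F (i - 1) = ∑ i : ZMod n, F i := by
    simpa [sub_eq_add_neg] using zmod_sum_shift F (-1)
  rw [Finset.sum_sub_distrib, this, sub_self]

end Aux

/-- Constant-coefficient version of the energy domination. -/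
theorem stmt_13 (d n m : ℕ) [NeZero n] (hn : 3 ≤ n) (hm : 1 ≤ m)
    (c : ZMod n → EuclideanSpace ℝ (Fin d))
    (hc : ∀ i : ZMod n, c i ≠ c (i + 1))
    (h : ZMod n → EuclideanSpace ℝ (Fin d)) :
    gdotCC c m h ≤ ((len c) ^ 2 / 4) * gdotCC c (m + 1) h := by
  obtain ⟨m', rfl⟩ : ∃ m', m = m' + 1 := ⟨m - 1, (Nat.succ_pred_eq_of_pos hm).symm⟩
  have hedge : ∀ i, edge c i ≠ 0 := fun i => sub_ne_zero.2 (Ne.symm (hc i))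
  have hepos : ∀ i, 0 < ‖edge c i‖ := fun i => norm_pos_iff.2 (hedge i)
  have hmupos : ∀ i, 0 < mu c i := fun i =>
    div_pos (add_pos (hepos i) (hepos (i - 1))) two_pos
  have hlen_mu : ∑ i : ZMod n, mu c i = len c := by
    have hshift : ∑ i : ZMod n, ‖edge c (i - 1)‖ = ∑ i : ZMod n, ‖edge c i‖ := by
      simpa [sub_eq_add_neg] using zmod_sum_shift (fun i => ‖edge c i‖) (-1 : ZMod n)
    simp only [mu]
    rw [← Finset.sum_div, Finset.sum_add_distrib, hshift, len, add_self_div_two]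
  rcases Nat.even_or_odd m' with hpar | hpar
  · -- m = m' + 1 odd
    have hodd : ¬ Even (m' + 1) := by simp [Nat.even_add_one, hpar]
    have heven2 : Even (m' + 1 + 1) := by simpa [Nat.even_add_one] using hodd
    have hf : ∀ i : ZMod n, Ds c (m' + 1) h i
        = (‖edge c i‖)⁻¹ • (Ds c m' h (i + 1) - Ds c m' h i) := by
      intro i
      rw [show Ds c (m' + 1) h i = if Even m' then
          (‖edge c i‖)⁻¹ • (Ds c m' h (i + 1) - Ds c m' h i)
          else (mu c i)⁻¹ • (Ds c m' h i - Ds c m' h (i - 1)) from rfl, if_pos hpar]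
    have hg : ∀ i : ZMod n, Ds c (m' + 1 + 1) h i
        = (mu c i)⁻¹ • (Ds c (m' + 1) h i - Ds c (m' + 1) h (i - 1)) := by
      intro i
      rw [show Ds c (m' + 1 + 1) h i = if Even (m' + 1) then
          (‖edge c i‖)⁻¹ • (Ds c (m' + 1) h (i + 1) - Ds c (m' + 1) h i)
          else (mu c i)⁻¹ • (Ds c (m' + 1) h i - Ds c (m' + 1) h (i - 1)) from rfl, if_neg hodd]
    have key := poincare (f := Ds c (m' + 1) h)
      (g := fun i => Ds c (m' + 1 + 1) h (i + 1))
      (v := fun i => mu c (i + 1)) (w := fun i => ‖edge c i‖)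
      (fun i => hmupos _) hepos (len c)
      ((zmod_sum_shift (mu c) 1).trans hlen_mu) rfl
      ?_ ?_
    · have hL : gdotCC c (m' + 1) h = ∑ i : ZMod n, ‖Ds c (m' + 1) h i‖ ^ 2 * ‖edge c i‖ := by
        unfold gdotCC muM
        simp [hodd]
      have hR : gdotCC c (m' + 1 + 1) h
          = ∑ i : ZMod n, ‖Ds c (m' + 1 + 1) h (i + 1)‖ ^ 2 * mu c (i + 1) := by
        have hs := zmod_sum_shift (fun i => ‖Ds c (m' + 1 + 1) h i‖ ^ 2 * mu c i) (1 : ZMod n)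
        unfold gdotCC muM
        simp only [if_pos heven2]
        exact hs.symm
      rw [hL, hR]
      exact key
    · -- mean zero
      have e : ∀ i : ZMod n, ‖edge c i‖ • Ds c (m' + 1) h i
          = Ds c m' h (i + 1) - Ds c m' h i := by
        intro i
        rw [hf i, smul_inv_smul₀ (norm_ne_zero_iff.2 (hedge i))]
      show ∑ i : ZMod n, ‖edge c i‖ • Ds c (m' + 1) h i = 0
      exact (Finset.sum_congr rfl fun i _ => e i).trans (zmod_tele_zero _)
    · -- step
      intro i
      show Ds c (m' + 1) h (i + 1) - Ds c (m' + 1) h i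
          = mu c (i + 1) • Ds c (m' + 1 + 1) h (i + 1)
      rw [hg (i + 1), add_sub_cancel_right, smul_inv_smul₀ (ne_of_gt (hmupos (i + 1)))]
  · -- m = m' + 1 even
    have hpar' : ¬ Even m' := Nat.not_even_iff_odd.mpr hpar
    have heven : Even (m' + 1) := Odd.add_one hpar
    have hodd2 : ¬ Even (m' + 1 + 1) := by simp [Nat.even_add_one, heven]
    have hf : ∀ i : ZMod n, Ds c (m' + 1) h i
        = (mu c i)⁻¹ • (Ds c m' h i - Ds c m' h (i - 1)) := by
      intro i
      rw [show Ds c (m' + 1) h i = if Even m' then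
          (‖edge c i‖)⁻¹ • (Ds c m' h (i + 1) - Ds c m' h i)
          else (mu c i)⁻¹ • (Ds c m' h i - Ds c m' h (i - 1)) from rfl, if_neg hpar']
    have hg : ∀ i : ZMod n, Ds c (m' + 1 + 1) h i
        = (‖edge c i‖)⁻¹ • (Ds c (m' + 1) h (i + 1) - Ds c (m' + 1) h i) := by
      intro i
      rw [show Ds c (m' + 1 + 1) h i = if Even (m' + 1) then
          (‖edge c i‖)⁻¹ • (Ds c (m' + 1) h (i + 1) - Ds c (m' + 1) h i)
          else (mu c i)⁻¹ • (Ds c (m' + 1) h i - Ds c (m' + 1) h (i - 1)) from rfl, if_pos heven]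
    have key := poincare (f := Ds c (m' + 1) h)
      (g := Ds c (m' + 1 + 1) h)
      (v := fun i => ‖edge c i‖) (w := mu c)
      hepos hmupos (len c) rfl hlen_mu
      ?_ ?_
    · have hL : gdotCC c (m' + 1) h = ∑ i : ZMod n, ‖Ds c (m' + 1) h i‖ ^ 2 * mu c i := by
        unfold gdotCC muM
        simp [heven]
      have hR : gdotCC c (m' + 1 + 1) h
          = ∑ i : ZMod n, ‖Ds c (m' + 1 + 1) h i‖ ^ 2 * ‖edge c i‖ := by
        unfold gdotCC muM
        simp [hodd2]
      rw [hL, hR]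
      exact key
    · have e : ∀ i : ZMod n, mu c i • Ds c (m' + 1) h i
          = Ds c m' h i - Ds c m' h (i - 1) := by
        intro i
        rw [hf i, smul_inv_smul₀ (ne_of_gt (hmupos i))]
      show ∑ i : ZMod n, mu c i • Ds c (m' + 1) h i = 0
      exact (Finset.sum_congr rfl fun i _ => e i).trans (zmod_tele_zero' _)
    · intro i
      show Ds c (m' + 1) h (i + 1) - Ds c (m' + 1) h i
          = ‖edge c i‖ • Ds c (m' + 1 + 1) h i
      rw [hg i, smul_inv_smul₀ (norm_ne_zero_iff.2 (hedge i))]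
end

section
/- Metric equivalence: if a_0, a_m > 0 and a_j ≥ 0 for 1 ≤ j ≤ m-1, then the metric g̃^m_c(h,h) = Σ_{j=0}^m a_j ġ^j_c(h,h) is uniformly equivalent to g^m_c(h,h) = ġ^0_c(h,h) + ġ^m_c(h,h): there is a constant C > 0, independent of c and h, with (1/C) g̃^m_c(h,h) ≤ g^m_c(h,h) ≤ C g̃^m_c(h,h) for all c ∈ R^{d×n}_* and h ∈ (ℝ^d)^n. -/
open scoped BigOperators
open Finset

noncomputable section Aux

open Finset

variable {d n : ℕ} [NeZero n]

lemma sum_shift {M : Type*} [AddCommMonoid M] (G : ZMod n → M) :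
    ∑ i : ZMod n, G (i + 1) = ∑ i, G i :=
  Fintype.sum_equiv (Equiv.addRight 1) _ _ (fun _ => rfl)

variable {c : ZMod n → EuclideanSpace ℝ (Fin d)}

lemma edge_pos (hc : ∀ i, c i ≠ c (i + 1)) (i : ZMod n) : 0 < ‖edge c i‖ := by
  rw [norm_pos_iff]
  exact sub_ne_zero.2 (Ne.symm (hc i))

lemma mu_pos (hc : ∀ i, c i ≠ c (i + 1)) (i : ZMod n) : 0 < mu c i :=
  div_pos (add_pos (edge_pos hc i) (edge_pos hc (i - 1))) two_pos

lemma muM_pos (hc : ∀ i, c i ≠ c (i + 1)) (j : ℕ) (i : ZMod n) : 0 < muM c j i := by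
  unfold muM; split
  · exact mu_pos hc i
  · exact edge_pos hc i

lemma len_pos (hc : ∀ i, c i ≠ c (i + 1)) : 0 < len c :=
  Finset.sum_pos (fun i _ => edge_pos hc i) Finset.univ_nonempty

lemma sum_mu : ∑ i : ZMod n, mu c i = len c := by
  have h1 : ∑ i : ZMod n, ‖edge c (i + 1 - 1)‖ = ∑ i : ZMod n, ‖edge c (i - 1)‖ :=
    sum_shift (fun i => ‖edge c (i - 1)‖)
  simp only [add_sub_cancel_right] at h1
  unfold mu len
  rw [← Finset.sum_div, Finset.sum_add_distrib, ← h1]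
  ring

lemma sum_muM (j : ℕ) : ∑ i : ZMod n, muM c j i = len c := by
  unfold muM; split
  · exact sum_mu
  · rfl

lemma meanzero (h : ZMod n → EuclideanSpace ℝ (Fin d)) (hc : ∀ i, c i ≠ c (i + 1))
    {j : ℕ} (hj : 1 ≤ j) : ∑ i : ZMod n, muM c j i • Ds c j h i = 0 := by
  obtain ⟨k, rfl⟩ : ∃ k, j = k + 1 := ⟨j - 1, by omega⟩
  by_cases hk : Even k
  · have hmm : ∀ i : ZMod n, muM c (k + 1) i = ‖edge c i‖ := fun i =>
      if_neg (by simp [Nat.even_add_one, hk])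
    have hds : ∀ i : ZMod n, Ds c (k + 1) h i
        = (‖edge c i‖)⁻¹ • (Ds c k h (i + 1) - Ds c k h i) := fun i => by
      simp only [Ds, if_pos hk]
    calc ∑ i : ZMod n, muM c (k + 1) i • Ds c (k + 1) h i
        = ∑ i : ZMod n, (Ds c k h (i + 1) - Ds c k h i) := by
          refine Finset.sum_congr rfl fun i _ => ?_
          rw [hmm, hds, smul_inv_smul₀ (edge_pos hc i).ne']
      _ = 0 := by
          rw [Finset.sum_sub_distrib, sum_shift (fun i => Ds c k h i), sub_self]
  · have hmm : ∀ i : ZMod n, muM c (k + 1) i = mu c i := fun i =>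
      if_pos (by simp [Nat.even_add_one, hk])
    have hds : ∀ i : ZMod n, Ds c (k + 1) h i
        = (mu c i)⁻¹ • (Ds c k h i - Ds c k h (i - 1)) := fun i => by
      simp only [Ds, if_neg hk]
    calc ∑ i : ZMod n, muM c (k + 1) i • Ds c (k + 1) h i
        = ∑ i : ZMod n, (Ds c k h i - Ds c k h (i - 1)) := by
          refine Finset.sum_congr rfl fun i _ => ?_
          rw [hmm, hds, smul_inv_smul₀ (mu_pos hc i).ne']
      _ = 0 := by
          have h1 : ∑ i : ZMod n, Ds c k h (i + 1 - 1) = ∑ i : ZMod n, Ds c k h (i - 1) :=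
            sum_shift (fun i => Ds c k h (i - 1))
          simp only [add_sub_cancel_right] at h1
          rw [Finset.sum_sub_distrib, ← h1, sub_self]

lemma gdot_eq (c : ZMod n → EuclideanSpace ℝ (Fin d))
    (h : ZMod n → EuclideanSpace ℝ (Fin d)) (j : ℕ) :
    gdot c j h h = len c ^ (2 * (j : ℤ) - 3) * ∑ i : ZMod n, ‖Ds c j h i‖ ^ 2 * muM c j i := by
  unfold gdot
  rw [Finset.mul_sum]
  exact Finset.sum_congr rfl fun i _ => by
    rw [real_inner_self_eq_norm_sq, mul_assoc]

lemma gdot_nonneg (hc : ∀ i, c i ≠ c (i + 1)) (h : ZMod n → EuclideanSpace ℝ (Fin d)) (j : ℕ) :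
    0 ≤ gdot c j h h := by
  rw [gdot_eq]
  exact mul_nonneg (zpow_nonneg (len_pos hc).le _)
    (Finset.sum_nonneg fun i _ => mul_nonneg (sq_nonneg _) (muM_pos hc j i).le)

end Aux
noncomputable section Step

open Finset

variable {d n : ℕ} [NeZero n]

lemma gdot_step (c h : ZMod n → EuclideanSpace ℝ (Fin d))
    (hc : ∀ i : ZMod n, c i ≠ c (i + 1)) {j : ℕ} (hj : 1 ≤ j) :
    gdot c j h h ≤ (n : ℝ) ^ 2 * gdot c (j + 1) h h := by
  set f := Ds c j h with hf
  set F := Ds c (j + 1) h with hF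
  set L := len c with hLdef
  have hL : 0 < L := len_pos hc
  set S : ℝ := ∑ p : ZMod n, muM c (j + 1) p * ‖F p‖ with hS
  have hterm : ∀ p : ZMod n, 0 ≤ muM c (j + 1) p * ‖F p‖ := fun p =>
    mul_nonneg (muM_pos hc _ p).le (norm_nonneg _)
  have hSnn : 0 ≤ S := Finset.sum_nonneg fun p _ => hterm p
  -- consecutive differences are single terms of S
  have hstep : ∀ i : ZMod n, ‖f (i + 1) - f i‖ ≤ S := by
    intro i
    by_cases hj2 : Even j
    · have h1 : f (i + 1) - f i = ‖edge c i‖ • F i := by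
        rw [hF]
        simp only [Ds, if_pos hj2, ← hf]
        rw [smul_inv_smul₀ (edge_pos hc i).ne']
      have h2 : muM c (j + 1) i = ‖edge c i‖ := if_neg (by simp [Nat.even_add_one, hj2])
      calc ‖f (i + 1) - f i‖ = muM c (j + 1) i * ‖F i‖ := by
            rw [h1, norm_smul, Real.norm_of_nonneg (norm_nonneg _), h2]
        _ ≤ S := Finset.single_le_sum (fun p _ => hterm p) (Finset.mem_univ i)
    · have h1 : f (i + 1) - f i = mu c (i + 1) • F (i + 1) := by
        rw [hF]
        simp only [Ds, if_neg hj2, ← hf, add_sub_cancel_right]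
        rw [smul_inv_smul₀ (mu_pos hc (i + 1)).ne']
      have h2 : muM c (j + 1) (i + 1) = mu c (i + 1) :=
        if_pos (by simp [Nat.even_add_one, hj2])
      calc ‖f (i + 1) - f i‖ = muM c (j + 1) (i + 1) * ‖F (i + 1)‖ := by
            rw [h1, norm_smul, Real.norm_of_nonneg (mu_pos hc (i + 1)).le, h2]
        _ ≤ S := Finset.single_le_sum (fun p _ => hterm p) (Finset.mem_univ (i + 1))
  -- telescoping
  have htel : ∀ (t : ℕ) (k : ZMod n), ‖f (k + (t : ZMod n)) - f k‖ ≤ (t : ℝ) * S := by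
    intro t
    induction t with
    | zero => simp
    | succ t ih =>
      intro k
      have hcast : (((t + 1 : ℕ)) : ZMod n) = (t : ZMod n) + 1 := by push_cast; ring
      calc ‖f (k + ((t + 1 : ℕ) : ZMod n)) - f k‖
          = ‖(f (k + (t : ZMod n) + 1) - f (k + (t : ZMod n))) + (f (k + (t : ZMod n)) - f k)‖ := by
            rw [hcast, sub_add_sub_cancel, add_assoc]
        _ ≤ ‖f (k + (t : ZMod n) + 1) - f (k + (t : ZMod n))‖ + ‖f (k + (t : ZMod n)) - f k‖ :=
            norm_add_le _ _
        _ ≤ S + (t : ℝ) * S := add_le_add (hstep _) (ih k)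
        _ = ((t + 1 : ℕ) : ℝ) * S := by push_cast; ring
  have hdiff : ∀ i k : ZMod n, ‖f i - f k‖ ≤ (n : ℝ) * S := by
    intro i k
    have h1 : k + (((i - k).val : ℕ) : ZMod n) = i := by
      rw [ZMod.natCast_zmod_val]; ring
    calc ‖f i - f k‖ = ‖f (k + (((i - k).val : ℕ) : ZMod n)) - f k‖ := by rw [h1]
      _ ≤ ((i - k).val : ℝ) * S := htel _ k
      _ ≤ (n : ℝ) * S := by
          apply mul_le_mul_of_nonneg_right _ hSnn
          exact_mod_cast (ZMod.val_lt (i - k)).le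
  -- pointwise bound via mean zero
  have hmz : ∑ k : ZMod n, muM c j k • f k = 0 := meanzero h hc hj
  have hsumw : ∑ k : ZMod n, muM c j k = L := sum_muM j
  have hpt : ∀ i : ZMod n, ‖f i‖ ≤ (n : ℝ) * S := by
    intro i
    have h2 : L • f i = ∑ k : ZMod n, muM c j k • (f i - f k) := by
      simp only [smul_sub, Finset.sum_sub_distrib, hmz, sub_zero, ← Finset.sum_smul, hsumw]
    have h3 : L * ‖f i‖ ≤ L * ((n : ℝ) * S) := by
      calc L * ‖f i‖ = ‖L • f i‖ := by rw [norm_smul, Real.norm_of_nonneg hL.le]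
        _ ≤ ∑ k : ZMod n, ‖muM c j k • (f i - f k)‖ := by rw [h2]; exact norm_sum_le _ _
        _ = ∑ k : ZMod n, muM c j k * ‖f i - f k‖ := by
            refine Finset.sum_congr rfl fun k _ => ?_
            rw [norm_smul, Real.norm_of_nonneg (muM_pos hc j k).le]
        _ ≤ ∑ k : ZMod n, muM c j k * ((n : ℝ) * S) :=
            Finset.sum_le_sum fun k _ =>
              mul_le_mul_of_nonneg_left (hdiff i k) (muM_pos hc j k).le
        _ = L * ((n : ℝ) * S) := by rw [← Finset.sum_mul, hsumw]
    exact le_of_mul_le_mul_left h3 hL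
  -- Cauchy–Schwarz
  set B : ℝ := ∑ p : ZMod n, ‖F p‖ ^ 2 * muM c (j + 1) p with hB
  have hBnn : 0 ≤ B := Finset.sum_nonneg fun p _ =>
    mul_nonneg (sq_nonneg _) (muM_pos hc _ p).le
  have hCS : S ^ 2 ≤ L * B := by
    have h4 := Finset.sum_mul_sq_le_sq_mul_sq Finset.univ
      (fun p : ZMod n => Real.sqrt (muM c (j + 1) p))
      (fun p : ZMod n => Real.sqrt (muM c (j + 1) p) * ‖F p‖)
    have h5 : ∀ p : ZMod n, Real.sqrt (muM c (j + 1) p) *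
        (Real.sqrt (muM c (j + 1) p) * ‖F p‖) = muM c (j + 1) p * ‖F p‖ := fun p => by
      rw [← mul_assoc, Real.mul_self_sqrt (muM_pos hc _ p).le]
    have h6 : ∀ p : ZMod n, Real.sqrt (muM c (j + 1) p) ^ 2 = muM c (j + 1) p := fun p =>
      Real.sq_sqrt (muM_pos hc _ p).le
    calc S ^ 2 = (∑ p : ZMod n, Real.sqrt (muM c (j + 1) p) *
          (Real.sqrt (muM c (j + 1) p) * ‖F p‖)) ^ 2 := by
          rw [hS]; congr 1; exact (Finset.sum_congr rfl fun p _ => h5 p).symm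
      _ ≤ (∑ p : ZMod n, Real.sqrt (muM c (j + 1) p) ^ 2) *
          (∑ p : ZMod n, (Real.sqrt (muM c (j + 1) p) * ‖F p‖) ^ 2) := h4
      _ = L * B := by
          congr 1
          · rw [hLdef, ← sum_muM (c := c) (j + 1)]
            exact Finset.sum_congr rfl fun p _ => h6 p
          · exact Finset.sum_congr rfl fun p _ => by
              rw [mul_pow, h6 p, mul_comm]
  -- assemble
  have hsum1 : ∑ i : ZMod n, ‖f i‖ ^ 2 * muM c j i ≤ ((n : ℝ) * S) ^ 2 * L := by
    calc ∑ i : ZMod n, ‖f i‖ ^ 2 * muM c j i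
        ≤ ∑ i : ZMod n, ((n : ℝ) * S) ^ 2 * muM c j i :=
          Finset.sum_le_sum fun i _ => mul_le_mul_of_nonneg_right
            (pow_le_pow_left₀ (norm_nonneg _) (hpt i) 2) (muM_pos hc j i).le
      _ = ((n : ℝ) * S) ^ 2 * L := by rw [← Finset.mul_sum, hsumw]
  have hzp : (0:ℝ) < L ^ (2 * (j : ℤ) - 3) := zpow_pos hL _
  have hpow : L ^ (2 * ((j : ℤ) + 1) - 3) = L ^ (2 * (j : ℤ) - 3) * L ^ 2 := by
    rw [show 2 * ((j : ℤ) + 1) - 3 = (2 * (j : ℤ) - 3) + 2 by ring,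
      zpow_add₀ hL.ne', zpow_two, sq]
  rw [gdot_eq, gdot_eq, ← hf, ← hF, ← hLdef, ← hB]
  push_cast
  calc L ^ (2 * (j : ℤ) - 3) * ∑ i : ZMod n, ‖f i‖ ^ 2 * muM c j i
      ≤ L ^ (2 * (j : ℤ) - 3) * (((n : ℝ) * S) ^ 2 * L) :=
        mul_le_mul_of_nonneg_left hsum1 hzp.le
    _ ≤ L ^ (2 * (j : ℤ) - 3) * (((n : ℝ)) ^ 2 * (L * B) * L) := by
        apply mul_le_mul_of_nonneg_left _ hzp.le
        apply mul_le_mul_of_nonneg_right _ hL.le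
        rw [mul_pow]
        exact mul_le_mul_of_nonneg_left hCS (sq_nonneg _)
    _ = (n : ℝ) ^ 2 * (L ^ (2 * ((j : ℤ) + 1) - 3) * B) := by rw [hpow]; ring
end Step
noncomputable section Iter

open Finset

variable {d n : ℕ} [NeZero n]

lemma gdot_iter (c h : ZMod n → EuclideanSpace ℝ (Fin d))
    (hc : ∀ i : ZMod n, c i ≠ c (i + 1)) {j : ℕ} (hj : 1 ≤ j) (k : ℕ) :
    gdot c j h h ≤ ((n : ℝ) ^ 2) ^ k * gdot c (j + k) h h := by
  induction k with
  | zero => simp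
  | succ k ih =>
    calc gdot c j h h ≤ ((n : ℝ) ^ 2) ^ k * gdot c (j + k) h h := ih
      _ ≤ ((n : ℝ) ^ 2) ^ k * ((n : ℝ) ^ 2 * gdot c (j + k + 1) h h) :=
          mul_le_mul_of_nonneg_left (gdot_step c h hc (by omega)) (by positivity)
      _ = ((n : ℝ) ^ 2) ^ (k + 1) * gdot c (j + (k + 1)) h h := by
          rw [pow_succ, ← add_assoc]; ring

lemma gdot_le_top (c h : ZMod n → EuclideanSpace ℝ (Fin d))
    (hc : ∀ i : ZMod n, c i ≠ c (i + 1)) {j m : ℕ} (hj : 1 ≤ j) (hjm : j ≤ m) :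
    gdot c j h h ≤ ((n : ℝ) ^ 2) ^ m * gdot c m h h := by
  have hn1 : (1 : ℝ) ≤ (n : ℝ) ^ 2 := by
    have h1 : 1 ≤ n := Nat.pos_of_ne_zero (NeZero.ne n)
    have h2 : (1 : ℝ) ≤ (n : ℝ) := by exact_mod_cast h1
    nlinarith
  calc gdot c j h h ≤ ((n : ℝ) ^ 2) ^ (m - j) * gdot c (j + (m - j)) h h :=
        gdot_iter c h hc hj (m - j)
    _ = ((n : ℝ) ^ 2) ^ (m - j) * gdot c m h h := by rw [Nat.add_sub_cancel' hjm]
    _ ≤ ((n : ℝ) ^ 2) ^ m * gdot c m h h :=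
        mul_le_mul_of_nonneg_right (pow_le_pow_right₀ hn1 (Nat.sub_le m j))
          (gdot_nonneg hc h m)

end Iter

/-- Uniform equivalence of `g^m` with any metric `Σ_j a_j ġ^j` having positive
lowest- and highest-order coefficients. -/
theorem stmt_14 (d n m : ℕ) [NeZero n] (hn : 3 ≤ n) (hm : 1 ≤ m) (a : ℕ → ℝ)
    (ha0 : 0 < a 0) (ham : 0 < a m)
    (haj : ∀ j, 1 ≤ j → j ≤ m - 1 → 0 ≤ a j) :
    ∃ C > 0, ∀ (c h : ZMod n → EuclideanSpace ℝ (Fin d)),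
      (∀ i : ZMod n, c i ≠ c (i + 1)) →
      (1 / C) * (∑ j ∈ Finset.range (m + 1), a j * gdot c j h h) ≤ gm c m h h ∧
      gm c m h h ≤ C * (∑ j ∈ Finset.range (m + 1), a j * gdot c j h h) := by
  have hann : ∀ j, j ≤ m → 0 ≤ a j := by
    intro j hjm
    rcases Nat.eq_zero_or_pos j with rfl | hj1
    · exact ha0.le
    rcases eq_or_lt_of_le hjm with rfl | hjlt
    · exact ham.le
    · exact haj j hj1 (by omega)
  set K : ℝ := ((n : ℝ) ^ 2) ^ m with hK
  have hKnn : 0 ≤ K := by positivity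
  set A : ℝ := ∑ j ∈ Finset.range (m + 1), a j with hA
  have hAnn : 0 ≤ A := Finset.sum_nonneg fun j hj =>
    hann j (Nat.lt_succ_iff.mp (Finset.mem_range.mp hj))
  set C1 : ℝ := a 0 + K * A + 1 with hC1
  have hC1pos : 0 < C1 := by positivity
  set C2 : ℝ := (a 0)⁻¹ + (a m)⁻¹ with hC2
  have hC2pos : 0 < C2 := by positivity
  refine ⟨max C1 C2, lt_of_lt_of_le hC1pos (le_max_left _ _), ?_⟩
  intro c h hc
  have hCpos : 0 < max C1 C2 := lt_of_lt_of_le hC1pos (le_max_left _ _)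
  have hgnn : ∀ j : ℕ, 0 ≤ gdot c j h h := fun j => gdot_nonneg hc h j
  have hgmnn : 0 ≤ gm c m h h := add_nonneg (hgnn 0) (hgnn m)
  have htermnn : ∀ j ∈ Finset.range (m + 1), 0 ≤ a j * gdot c j h h := fun j hj =>
    mul_nonneg (hann j (Nat.lt_succ_iff.mp (Finset.mem_range.mp hj))) (hgnn j)
  have hSnn : 0 ≤ ∑ j ∈ Finset.range (m + 1), a j * gdot c j h h :=
    Finset.sum_nonneg htermnn
  -- upper bound of the weighted sum by C1 * gm
  have claim1 : ∑ j ∈ Finset.range (m + 1), a j * gdot c j h h ≤ C1 * gm c m h h := by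
    have hsplit := Finset.sum_range_succ' (fun j => a j * gdot c j h h) m
    have hmid : ∑ j ∈ Finset.range m, a (j + 1) * gdot c (j + 1) h h
        ≤ A * (K * gdot c m h h) := by
      have step1 : ∑ j ∈ Finset.range m, a (j + 1) * gdot c (j + 1) h h
          ≤ ∑ j ∈ Finset.range m, a (j + 1) * (K * gdot c m h h) := by
        refine Finset.sum_le_sum fun j hj => ?_
        have hjr := Finset.mem_range.mp hj
        exact mul_le_mul_of_nonneg_left
          (gdot_le_top c h hc (Nat.succ_le_succ (Nat.zero_le j)) (by omega))
          (hann (j + 1) (by omega))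
      have step2 : ∑ j ∈ Finset.range m, a (j + 1) * (K * gdot c m h h)
          = (∑ j ∈ Finset.range m, a (j + 1)) * (K * gdot c m h h) :=
        (Finset.sum_mul _ _ _).symm
      have step3 : ∑ j ∈ Finset.range m, a (j + 1) ≤ A := by
        rw [hA, Finset.sum_range_succ' a m]
        linarith [ha0.le]
      calc ∑ j ∈ Finset.range m, a (j + 1) * gdot c (j + 1) h h
          ≤ (∑ j ∈ Finset.range m, a (j + 1)) * (K * gdot c m h h) := by
            rw [← step2]; exact step1
        _ ≤ A * (K * gdot c m h h) :=
            mul_le_mul_of_nonneg_right step3 (mul_nonneg hKnn (hgnn m))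
    have h1 : A * K ≤ C1 := by nlinarith
    have h2 : a 0 ≤ C1 := by nlinarith
    have hg0 := hgnn 0; have hgm := hgnn m
    calc ∑ j ∈ Finset.range (m + 1), a j * gdot c j h h
        = (∑ j ∈ Finset.range m, a (j + 1) * gdot c (j + 1) h h) + a 0 * gdot c 0 h h :=
          hsplit
      _ ≤ A * (K * gdot c m h h) + a 0 * gdot c 0 h h := by linarith
      _ ≤ C1 * gdot c m h h + C1 * gdot c 0 h h := by nlinarith
      _ = C1 * gm c m h h := by rw [gm]; ring
  -- lower bound of the weighted sum
  have claim2 : gm c m h h ≤ C2 * ∑ j ∈ Finset.range (m + 1), a j * gdot c j h h := by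
    have h0 : a 0 * gdot c 0 h h ≤ ∑ j ∈ Finset.range (m + 1), a j * gdot c j h h :=
      Finset.single_le_sum htermnn (Finset.mem_range.mpr (by omega))
    have hmm : a m * gdot c m h h ≤ ∑ j ∈ Finset.range (m + 1), a j * gdot c j h h :=
      Finset.single_le_sum htermnn (Finset.mem_range.mpr (by omega))
    have e0 : gdot c 0 h h
        ≤ (a 0)⁻¹ * ∑ j ∈ Finset.range (m + 1), a j * gdot c j h h := by
      rw [le_inv_mul_iff₀ ha0]
      exact h0
    have em : gdot c m h h
        ≤ (a m)⁻¹ * ∑ j ∈ Finset.range (m + 1), a j * gdot c j h h := by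
      rw [le_inv_mul_iff₀ ham]
      exact hmm
    calc gm c m h h = gdot c 0 h h + gdot c m h h := rfl
      _ ≤ (a 0)⁻¹ * (∑ j ∈ Finset.range (m + 1), a j * gdot c j h h)
          + (a m)⁻¹ * (∑ j ∈ Finset.range (m + 1), a j * gdot c j h h) :=
          add_le_add e0 em
      _ = C2 * ∑ j ∈ Finset.range (m + 1), a j * gdot c j h h := by rw [hC2]; ring
  constructor
  · rw [one_div, inv_mul_le_iff₀ hCpos]
    calc ∑ j ∈ Finset.range (m + 1), a j * gdot c j h h ≤ C1 * gm c m h h := claim1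
      _ ≤ max C1 C2 * gm c m h h :=
          mul_le_mul_of_nonneg_right (le_max_left _ _) hgmnn
  · calc gm c m h h ≤ C2 * ∑ j ∈ Finset.range (m + 1), a j * gdot c j h h := claim2
      _ ≤ max C1 C2 * ∑ j ∈ Finset.range (m + 1), a j * gdot c j h h :=
          mul_le_mul_of_nonneg_right (le_max_right _ _) hSnn
end

section
/- Lipschitz estimate for the inverse length: for c ∈ R^{d×n}_* and h ∈ (ℝ^d)^n, the directional derivative of 1/ℓ(c) in direction h satisfies |d(1/ℓ(c))·h| ≤ ℓ(c)^{-3/2} √(Σ_{i=1}^n |h_{i+1}-h_i|²/|e_i|). -/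
open scoped BigOperators
open Finset

private lemma hasDerivAt_norm_add_smul_aux {E : Type*} [NormedAddCommGroup E]
    [InnerProductSpace ℝ E] (a b : E) (ha : a ≠ 0) :
    HasDerivAt (fun t : ℝ => ‖a + t • b‖) ((inner ℝ b a : ℝ) / ‖a‖) 0 := by
  have hline : HasDerivAt (fun t : ℝ => a + t • b) b 0 := by
    simpa using ((hasDerivAt_id (0:ℝ)).smul_const b).const_add a
  have hq : HasDerivAt (fun t : ℝ => (inner ℝ (a + t • b) (a + t • b) : ℝ))
      ((inner ℝ a b : ℝ) + inner ℝ b a) 0 := by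
    simpa using hline.inner ℝ hline
  have h0 : (inner ℝ (a + (0:ℝ) • b) (a + (0:ℝ) • b) : ℝ) ≠ 0 := by
    simpa using (inner_self_ne_zero (𝕜 := ℝ)).mpr ha
  have := hq.sqrt h0
  have heq : (fun t : ℝ => Real.sqrt (inner ℝ (a + t • b) (a + t • b) : ℝ)) =
      fun t : ℝ => ‖a + t • b‖ := by
    funext t
    rw [real_inner_self_eq_norm_sq, Real.sqrt_sq (norm_nonneg _)]
  rw [heq] at this
  convert this using 1
  have : Real.sqrt (inner ℝ (a + (0:ℝ) • b) (a + (0:ℝ) • b) : ℝ) = ‖a‖ := by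
    simp [real_inner_self_eq_norm_sq, Real.sqrt_sq (norm_nonneg _)]
  rw [this, real_inner_comm a b]
  ring

/-- Lipschitz estimate for the inverse length: the directional derivative of
`1/ℓ(c)` in direction `h` is bounded by `ℓ(c)^{-3/2}` times the square root of
the first-order discrete Sobolev energy of `h`. -/
theorem stmt_18 (d n : ℕ) [NeZero n] (hn : 3 ≤ n)
    (c h : ZMod n → EuclideanSpace ℝ (Fin d))
    (hc : ∀ i : ZMod n, c i ≠ c (i + 1)) :
    |deriv (fun t : ℝ => (len (fun i => c i + t • h i))⁻¹) 0| ≤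
      (len c) ^ (-(3 : ℝ) / 2) *
        Real.sqrt (∑ i : ZMod n, ‖h (i + 1) - h i‖ ^ 2 / ‖edge c i‖) := by
  have he : ∀ i : ZMod n, edge c i ≠ 0 := fun i => by
    simp only [edge, sub_ne_zero]
    exact fun hh => hc i hh.symm
  have hepos : ∀ i : ZMod n, 0 < ‖edge c i‖ := fun i => norm_pos_iff.mpr (he i)
  have hl : 0 < len c :=
    Finset.sum_pos (fun i _ => hepos i) Finset.univ_nonempty
  set S : ℝ := ∑ i : ZMod n, (inner ℝ (h (i+1) - h i) (edge c i) : ℝ) / ‖edge c i‖ with hS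
  -- the derivative of the length
  have hedge : ∀ (t : ℝ) (i : ZMod n),
      edge (fun j => c j + t • h j) i = edge c i + t • (h (i+1) - h i) := by
    intro t i
    simp only [edge, smul_sub]
    abel
  have hlen : ∀ t : ℝ, len (fun j => c j + t • h j) =
      ∑ i : ZMod n, ‖edge c i + t • (h (i+1) - h i)‖ := by
    intro t
    simp only [len, hedge]
  have hf : HasDerivAt (fun t : ℝ => len (fun j => c j + t • h j)) S 0 := by
    simp only [funext hlen]
    exact HasDerivAt.fun_sum fun i _ =>
      hasDerivAt_norm_add_smul_aux (edge c i) (h (i+1) - h i) (he i)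
  have hf0 : len (fun j => c j + (0:ℝ) • h j) = len c := by
    simp [len, edge]
  have hne : len (fun j => c j + (0:ℝ) • h j) ≠ 0 := by rw [hf0]; exact hl.ne'
  have hg : HasDerivAt (fun t : ℝ => (len (fun j => c j + t • h j))⁻¹)
      (-S / (len c) ^ 2) 0 := by
    have := hf.inv hne
    rwa [hf0] at this
  rw [hg.deriv, abs_div, abs_neg, abs_pow, abs_of_pos hl]
  -- bound |S|
  have hS1 : |S| ≤ ∑ i : ZMod n, ‖h (i+1) - h i‖ := by
    refine (Finset.abs_sum_le_sum_abs _ _).trans (Finset.sum_le_sum fun i _ => ?_)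
    rw [abs_div, abs_of_pos (hepos i), div_le_iff₀ (hepos i)]
    exact (abs_real_inner_le_norm _ _)
  have hCS : ∑ i : ZMod n, ‖h (i+1) - h i‖ ≤
      Real.sqrt (∑ i : ZMod n, ‖h (i+1) - h i‖ ^ 2 / ‖edge c i‖) * Real.sqrt (len c) := by
    have key := Finset.sum_mul_sq_le_sq_mul_sq Finset.univ
      (fun i : ZMod n => ‖h (i+1) - h i‖ / Real.sqrt ‖edge c i‖)
      (fun i : ZMod n => Real.sqrt ‖edge c i‖)
    have h1 : ∀ i : ZMod n,
        ‖h (i+1) - h i‖ / Real.sqrt ‖edge c i‖ * Real.sqrt ‖edge c i‖ = ‖h (i+1) - h i‖ := by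
      intro i
      rw [div_mul_cancel₀]
      exact (Real.sqrt_pos.mpr (hepos i)).ne'
    have h2 : ∀ i : ZMod n,
        (‖h (i+1) - h i‖ / Real.sqrt ‖edge c i‖) ^ 2 = ‖h (i+1) - h i‖ ^ 2 / ‖edge c i‖ := by
      intro i
      rw [div_pow, Real.sq_sqrt (hepos i).le]
    have h3 : ∀ i : ZMod n, (Real.sqrt ‖edge c i‖) ^ 2 = ‖edge c i‖ := fun i =>
      Real.sq_sqrt (hepos i).le
    simp only [h1, h2, h3] at key
    have hnn : (0:ℝ) ≤ ∑ i : ZMod n, ‖h (i+1) - h i‖ := Finset.sum_nonneg fun i _ => norm_nonneg _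
    calc ∑ i : ZMod n, ‖h (i+1) - h i‖
        = Real.sqrt ((∑ i : ZMod n, ‖h (i+1) - h i‖) ^ 2) := (Real.sqrt_sq hnn).symm
      _ ≤ Real.sqrt ((∑ i : ZMod n, ‖h (i+1) - h i‖ ^ 2 / ‖edge c i‖) * ∑ i : ZMod n, ‖edge c i‖) :=
          Real.sqrt_le_sqrt key
      _ = _ := by rw [Real.sqrt_mul (Finset.sum_nonneg fun i _ => by positivity), len]
  have hrw : (len c) ^ (-(3 : ℝ) / 2) = Real.sqrt (len c) / (len c) ^ 2 := by
    rw [Real.sqrt_eq_rpow, show (-(3:ℝ)/2) = (1/2 : ℝ) - 2 by norm_num,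
      Real.rpow_sub hl, div_eq_div_iff (by positivity) (by positivity)]
    rw [show ((2:ℝ) : ℝ) = ((2:ℕ) : ℝ) by norm_num, Real.rpow_natCast]
  rw [hrw, div_mul_eq_mul_div, div_le_div_iff₀ (by positivity) (by positivity)]
  calc |S| * (len c) ^ 2 ≤ (Real.sqrt (∑ i : ZMod n, ‖h (i+1) - h i‖ ^ 2 / ‖edge c i‖) *
        Real.sqrt (len c)) * (len c) ^ 2 := by
        exact mul_le_mul_of_nonneg_right (hS1.trans hCS) (by positivity)
  _ = Real.sqrt (len c) * Real.sqrt (∑ i : ZMod n, ‖h (i+1) - h i‖ ^ 2 / ‖edge c i‖) *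
        (len c) ^ 2 := by ring
end

section
/- Global Lipschitz bound for the square root of length: for c ∈ R^{d×n}_* and h ∈ (ℝ^d)^n, |d(√ℓ(c))·h| ≤ √(Σ_{i=1}^n |h_{i+1}-h_i|²/|e_i|). -/
open scoped BigOperators
open Finset

/-- Global Lipschitz bound for the square root of the length. -/
theorem stmt_19 (d n : ℕ) [NeZero n] (hn : 3 ≤ n)
    (c h : ZMod n → EuclideanSpace ℝ (Fin d))
    (hc : ∀ i : ZMod n, c i ≠ c (i + 1)) :
    |deriv (fun t : ℝ => Real.sqrt (len (fun i => c i + t • h i))) 0| ≤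
      Real.sqrt (∑ i : ZMod n, ‖h (i + 1) - h i‖ ^ 2 / ‖edge c i‖) := by
  set w : ZMod n → EuclideanSpace ℝ (Fin d) := fun i => h (i + 1) - h i with hw
  have he : ∀ i : ZMod n, edge c i ≠ 0 := fun i => sub_ne_zero.mpr (hc i).symm
  have hepos : ∀ i : ZMod n, (0:ℝ) < ‖edge c i‖ := fun i => norm_pos_iff.mpr (he i)
  have hlpos : (0:ℝ) < len c :=
    Finset.sum_pos (fun i _ => hepos i) Finset.univ_nonempty
  -- derivative of each term
  have hterm : ∀ i : ZMod n, HasDerivAt (fun t : ℝ => ‖edge c i + t • w i‖)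
      ((inner ℝ (edge c i) (w i) : ℝ) / ‖edge c i‖) 0 := by
    intro i
    have h1 : HasDerivAt (fun t : ℝ => edge c i + t • w i) (w i) 0 := by
      simpa using ((hasDerivAt_id (0:ℝ)).smul_const (w i)).const_add (edge c i)
    have h2 : HasDerivAt (fun t : ℝ => ‖edge c i + t • w i‖ ^ 2)
        (2 * (inner ℝ (edge c i) (w i) : ℝ)) 0 := by
      have := h1.norm_sq
      simpa using this
    have hne : ‖edge c i + (0:ℝ) • w i‖ ^ 2 ≠ 0 := by
      simp [pow_eq_zero_iff, he i]
    have h3 := (Real.hasDerivAt_sqrt (by simpa using hne)).comp 0 h2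
    have heq : (fun t : ℝ => Real.sqrt (‖edge c i + t • w i‖ ^ 2)) =
        fun t : ℝ => ‖edge c i + t • w i‖ := by
      funext t; exact Real.sqrt_sq (norm_nonneg _)
    rw [Function.comp_def] at h3
    rw [heq] at h3
    refine h3.congr_deriv ?_
    have : Real.sqrt (‖edge c i + (0:ℝ) • w i‖ ^ 2) = ‖edge c i‖ := by
      simp [Real.sqrt_sq (norm_nonneg _)]
    rw [this]
    field_simp
  set D : ℝ := ∑ i : ZMod n, (inner ℝ (edge c i) (w i) : ℝ) / ‖edge c i‖ with hD
  have hsum : HasDerivAt (fun t : ℝ => len (fun i => c i + t • h i)) D 0 := by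
    have : (fun t : ℝ => len (fun i => c i + t • h i)) =
        fun t : ℝ => ∑ i : ZMod n, ‖edge c i + t • w i‖ := by
      funext t
      unfold len edge
      congr 1; funext i
      congr 1
      simp only [hw]
      ext j
      simp [smul_sub]
      ring
    rw [this, hD]
    exact HasDerivAt.fun_sum fun i _ => hterm i
  have hF : HasDerivAt (fun t : ℝ => Real.sqrt (len (fun i => c i + t • h i)))
      (D / (2 * Real.sqrt (len c))) 0 := by
    have h0 : len (fun i => c i + (0:ℝ) • h i) = len c := by
      unfold len edge; congr 1; funext i; simp
    have := (Real.hasDerivAt_sqrt (by rw [h0]; exact hlpos.ne')).comp 0 hsum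
    rw [h0] at this
    refine this.congr_deriv ?_
    ring
  rw [hF.deriv]
  -- now the estimate
  set S : ℝ := ∑ i : ZMod n, ‖w i‖ ^ 2 / ‖edge c i‖ with hS
  have hSnn : 0 ≤ S := Finset.sum_nonneg fun i _ => div_nonneg (sq_nonneg _) (norm_nonneg _)
  have hDle : |D| ≤ ∑ i : ZMod n, ‖w i‖ := by
    calc |D| ≤ ∑ i : ZMod n, |(inner ℝ (edge c i) (w i) : ℝ) / ‖edge c i‖| :=
          Finset.abs_sum_le_sum_abs _ _
      _ ≤ ∑ i : ZMod n, ‖w i‖ := by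
          refine Finset.sum_le_sum fun i _ => ?_
          rw [abs_div, abs_of_pos (hepos i), div_le_iff₀ (hepos i)]
          calc |(inner ℝ (edge c i) (w i) : ℝ)| ≤ ‖edge c i‖ * ‖w i‖ :=
                abs_real_inner_le_norm _ _
            _ = ‖w i‖ * ‖edge c i‖ := mul_comm _ _
  have hCS : (∑ i : ZMod n, ‖w i‖) ^ 2 ≤ S * len c := by
    have h5 := Finset.sq_sum_div_le_sum_sq_div Finset.univ (fun i => ‖w i‖)
      (fun i (_ : i ∈ Finset.univ) => hepos i)
    have h6 : (∑ i : ZMod n, ‖w i‖) ^ 2 / len c ≤ S := h5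
    calc (∑ i : ZMod n, ‖w i‖) ^ 2
        = ((∑ i : ZMod n, ‖w i‖) ^ 2 / len c) * len c := by field_simp
      _ ≤ S * len c := mul_le_mul_of_nonneg_right h6 hlpos.le
  have hwle : (∑ i : ZMod n, ‖w i‖) ≤ Real.sqrt S * Real.sqrt (len c) := by
    rw [← Real.sqrt_mul hSnn]
    have h4 := Real.sqrt_le_sqrt hCS
    rwa [Real.sqrt_sq (Finset.sum_nonneg fun i _ => norm_nonneg _)] at h4
  have hsq : (0:ℝ) < Real.sqrt (len c) := Real.sqrt_pos.mpr hlpos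
  rw [abs_div, abs_of_pos (by positivity : (0:ℝ) < 2 * Real.sqrt (len c)),
    div_le_iff₀ (by positivity)]
  calc |D| ≤ Real.sqrt S * Real.sqrt (len c) := hDle.trans hwle
    _ ≤ Real.sqrt S * (2 * Real.sqrt (len c)) := by nlinarith [Real.sqrt_nonneg S, hsq]
end
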